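/- arXiv:1910.00547 — 2 statements merged into one kernel-verified Lean document; each statement's English description precedes it below -/
import Mathlib

section
/- Let λ > 0 be real, and let m be a positive integer with 2mλ ≥ √3. Then ∑_{j=m+1}^{∞} (4j²λ² − 1)·exp(−2j²λ²) ≤ ∫_m^∞ (4r²λ² − 1)·exp(−2r²λ²) dr = m·exp(−2m²λ²). -/
open MeasureTheory Real Set Filter Topology

/-- Tail sum–integral comparison (upper bound): for `λ > 0` and a positive integer `m`
with `2mλ ≥ √3`, `∑_{j=m+1}^∞ v(j,λ) ≤ ∫_m^∞ v(r,λ) dr = m·exp(-2m²λ²)`. -/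
theorem stmt_11 (l : ℝ) (hl : 0 < l) (m : ℕ) (hm : 0 < m)
    (h : Real.sqrt 3 ≤ 2 * m * l) :
    (∑' j : ℕ, (4 * ((m : ℝ) + 1 + j) ^ 2 * l ^ 2 - 1)
        * Real.exp (-2 * ((m : ℝ) + 1 + j) ^ 2 * l ^ 2))
      ≤ ∫ r in Set.Ici (m : ℝ), (4 * r ^ 2 * l ^ 2 - 1) * Real.exp (-2 * r ^ 2 * l ^ 2) ∧
    (∫ r in Set.Ici (m : ℝ), (4 * r ^ 2 * l ^ 2 - 1) * Real.exp (-2 * r ^ 2 * l ^ 2))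
      = m * Real.exp (-2 * (m : ℝ) ^ 2 * l ^ 2) := by
  set v : ℝ → ℝ := fun r => (4 * r ^ 2 * l ^ 2 - 1) * Real.exp (-2 * r ^ 2 * l ^ 2) with hv
  have hm1 : (1 : ℝ) ≤ (m : ℝ) := by exact_mod_cast hm
  have h3 : (3 : ℝ) ≤ (2 * m * l) ^ 2 := by
    have := Real.sq_sqrt (by norm_num : (0:ℝ) ≤ 3)
    nlinarith [Real.sqrt_nonneg 3]
  -- derivative of f r = -r * exp(-2 r² l²) is v
  have hf : ∀ x : ℝ, HasDerivAt (fun r : ℝ => -r * Real.exp (-2 * r ^ 2 * l ^ 2)) (v x) x := by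
    intro x
    have h1 : HasDerivAt (fun r : ℝ => -2 * r ^ 2 * l ^ 2) (-4 * x * l ^ 2) x := by
      have := ((hasDerivAt_pow 2 x).const_mul (-2 : ℝ)).mul_const (l ^ 2)
      exact this.congr_deriv (by norm_num; exact Or.inl (by ring))
    have h2 := ((hasDerivAt_id x).neg).mul h1.exp
    refine h2.congr_deriv ?_
    simp only [hv, id_eq, Pi.neg_apply]
    ring
  -- derivative of v
  have hg : ∀ x : ℝ, HasDerivAt v
      (4 * x * l ^ 2 * (3 - 4 * x ^ 2 * l ^ 2) * Real.exp (-2 * x ^ 2 * l ^ 2)) x := by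
    intro x
    have h1 : HasDerivAt (fun r : ℝ => -2 * r ^ 2 * l ^ 2) (-4 * x * l ^ 2) x := by
      have := ((hasDerivAt_pow 2 x).const_mul (-2 : ℝ)).mul_const (l ^ 2)
      exact this.congr_deriv (by norm_num; exact Or.inl (by ring))
    have h0 : HasDerivAt (fun r : ℝ => 4 * r ^ 2 * l ^ 2 - 1) (8 * x * l ^ 2) x := by
      have := (((hasDerivAt_pow 2 x).const_mul (4 : ℝ)).mul_const (l ^ 2)).sub_const 1
      exact this.congr_deriv (by norm_num; exact Or.inl (by ring))
    have h2 := h0.mul h1.exp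
    refine h2.congr_deriv ?_
    ring
  -- v is nonnegative on Ioi m
  have hnn : ∀ x : ℝ, (m : ℝ) ≤ x → 0 ≤ v x := by
    intro x hx
    have hx2 : (m : ℝ) ^ 2 ≤ x ^ 2 := by nlinarith
    have : (1 : ℝ) ≤ 4 * x ^ 2 * l ^ 2 := by
      nlinarith [mul_le_mul_of_nonneg_right hx2 (sq_nonneg l)]
    have := Real.exp_pos (-2 * x ^ 2 * l ^ 2)
    simp only [hv]
    nlinarith
  -- tendsto of f at top
  have htend : Tendsto (fun r : ℝ => -r * Real.exp (-2 * r ^ 2 * l ^ 2)) atTop (𝓝 0) := by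
    have hb : (0 : ℝ) < 2 * l ^ 2 := by positivity
    have hlo := rpow_mul_exp_neg_mul_sq_isLittleO_exp_neg hb 1
    have h0 : Tendsto (fun x : ℝ => Real.exp (-(1/2) * x)) atTop (𝓝 0) := by
      refine Real.tendsto_exp_atBot.comp ?_
      exact Tendsto.const_mul_atTop_of_neg (by norm_num : (-(1/2) : ℝ) < 0) tendsto_id
    have ht := hlo.trans_tendsto h0
    have heq : (fun r : ℝ => -r * Real.exp (-2 * r ^ 2 * l ^ 2))
        = fun x : ℝ => -(x ^ (1:ℝ) * Real.exp (-(2 * l ^ 2) * x ^ 2)) := by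
      funext x; rw [Real.rpow_one]; ring_nf
    rw [heq, show (0:ℝ) = -0 by norm_num]
    exact ht.neg
  -- integrability and value of the integral
  have hintg : IntegrableOn v (Ioi (m : ℝ)) :=
    integrableOn_Ioi_deriv_of_nonneg' (fun x _ => hf x)
      (fun x hx => hnn x (le_of_lt hx)) htend
  have hval : (∫ r in Ioi (m : ℝ), v r) = m * Real.exp (-2 * (m : ℝ) ^ 2 * l ^ 2) := by
    rw [integral_Ioi_of_hasDerivAt_of_nonneg' (fun x _ => hf x)
      (fun x hx => hnn x (le_of_lt hx)) htend]
    ring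
  -- antitonicity of v on [m, ∞)
  have hanti : AntitoneOn v (Ici (m : ℝ)) := by
    apply antitoneOn_of_deriv_nonpos (convex_Ici (m : ℝ))
    · exact fun x _ => ((hg x).continuousAt).continuousWithinAt
    · exact fun x _ => (hg x).differentiableAt.differentiableWithinAt
    · intro x hx
      rw [interior_Ici] at hx
      rw [(hg x).deriv]
      have hx0 : (0 : ℝ) < x := by have := hx.out; linarith
      have h4 : 3 - 4 * x ^ 2 * l ^ 2 ≤ 0 := by nlinarith [hx.out]
      apply mul_nonpos_of_nonpos_of_nonneg
      · exact mul_nonpos_of_nonneg_of_nonpos (by positivity) h4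
      · exact (Real.exp_pos _).le
  -- the covering intervals
  set S : ℕ → Set ℝ := fun j => Ioc ((m : ℝ) + j) ((m : ℝ) + 1 + j) with hS
  have hUnion : (⋃ j, S j) = Ioi (m : ℝ) := by
    ext x
    simp only [hS, mem_iUnion, mem_Ioc, mem_Ioi]
    constructor
    · rintro ⟨j, h1, _⟩
      have : (0 : ℝ) ≤ (j : ℝ) := Nat.cast_nonneg j
      linarith
    · intro hx
      have hpos : (0 : ℝ) < x - m := by linarith
      have hk1 : 1 ≤ ⌈x - (m : ℝ)⌉₊ := Nat.one_le_iff_ne_zero.2 (by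
        simpa using (Nat.ceil_pos.2 hpos).ne')
      refine ⟨⌈x - (m : ℝ)⌉₊ - 1, ?_, ?_⟩
      · have hc2 : ((⌈x - (m : ℝ)⌉₊ : ℝ)) < x - m + 1 := Nat.ceil_lt_add_one hpos.le
        have hcast : (((⌈x - (m : ℝ)⌉₊ - 1 : ℕ)) : ℝ) = (⌈x - (m : ℝ)⌉₊ : ℝ) - 1 := by
          push_cast [hk1]; ring
        rw [hcast]; linarith
      · have hc : x - m ≤ (⌈x - (m : ℝ)⌉₊ : ℝ) := Nat.le_ceil _
        have hcast : (((⌈x - (m : ℝ)⌉₊ - 1 : ℕ)) : ℝ) = (⌈x - (m : ℝ)⌉₊ : ℝ) - 1 := by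
          push_cast [hk1]; ring
        rw [hcast]; linarith
  have hdisj : Pairwise (Function.onFun Disjoint S) := by
    intro i j hij
    simp only [hS, Function.onFun]
    rw [Set.Ioc_disjoint_Ioc]
    rcases hij.lt_or_gt with h' | h'
    · have : (i : ℝ) + 1 ≤ j := by exact_mod_cast h'
      refine le_trans (min_le_left _ _) (le_max_of_le_right (by linarith))
    · have : (j : ℝ) + 1 ≤ i := by exact_mod_cast h'
      refine le_trans (min_le_right _ _) (le_max_of_le_left (by linarith))
  have hmeas : ∀ j, MeasurableSet (S j) := fun j => measurableSet_Ioc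
  have hintU : IntegrableOn v (⋃ j, S j) := by rw [hUnion]; exact hintg
  have hHasSum : HasSum (fun j => ∫ r in S j, v r) (∫ r in Ioi (m : ℝ), v r) := by
    have := hasSum_integral_iUnion hmeas hdisj hintU
    rwa [hUnion] at this
  -- each term bound
  have hterm : ∀ j : ℕ, v ((m : ℝ) + 1 + j) ≤ ∫ r in S j, v r := by
    intro j
    have hjnn : (0 : ℝ) ≤ (j : ℝ) := Nat.cast_nonneg j
    have hle : ((m : ℝ) + j) ≤ (m : ℝ) + 1 + j := by linarith
    have hconst : (∫ _ in S j, v ((m : ℝ) + 1 + j)) = v ((m : ℝ) + 1 + j) := by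
      rw [setIntegral_const, hS]
      simp only [Real.volume_real_Ioc]
      rw [show (m : ℝ) + 1 + j - ((m : ℝ) + j) = 1 by ring]
      simp
    rw [← hconst]
    apply setIntegral_mono_on
    · exact integrableOn_const (by rw [hS]; simp [Real.volume_Ioc])
    · exact hintg.mono_set (by rw [← hUnion]; exact subset_iUnion S j)
    · exact measurableSet_Ioc
    · intro x hx
      have hx1 : (m : ℝ) + j < x := hx.1
      have hx2 : x ≤ (m : ℝ) + 1 + j := hx.2
      exact hanti (mem_Ici.2 (by linarith)) (mem_Ici.2 (by linarith)) hx2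
  have hsum2 : Summable (fun j => ∫ r in S j, v r) := hHasSum.summable
  have hsum1 : Summable (fun j : ℕ => v ((m : ℝ) + 1 + j)) :=
    Summable.of_nonneg_of_le (fun j => hnn _ (by
      have : (0 : ℝ) ≤ (j : ℝ) := Nat.cast_nonneg j; linarith)) hterm hsum2
  have hIci : (∫ r in Set.Ici (m : ℝ), v r) = ∫ r in Ioi (m : ℝ), v r :=
    integral_Ici_eq_integral_Ioi
  constructor
  · calc (∑' j : ℕ, v ((m : ℝ) + 1 + j)) ≤ ∑' j, ∫ r in S j, v r :=
          Summable.tsum_le_tsum hterm hsum1 hsum2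
      _ = ∫ r in Ioi (m : ℝ), v r := hHasSum.tsum_eq
      _ = ∫ r in Set.Ici (m : ℝ), v r := hIci.symm
  · rw [hIci, hval]
end

section
/- (Upper bound of Proposition 2.) Let λ > 0 be real, and set r_lo = ⌊1/(√2·λ)⌋ and r_up = ⌈1/(√2·λ)⌉. Assume 1/(√2·λ) is not an integer (so r_lo < r_up) and assume 2·r_up·λ ≥ √3. Then ∑_{j=1}^{∞} v(j,λ) ≤ [if r_lo ≥ 1 then (w(r_lo,λ) − w(1,λ) + v(r_lo,λ)) else 0] + v(r_up,λ) − w(r_up,λ), where v(r,λ) = (4r²λ² − 1)·exp(−2r²λ²) and w(r,λ) = −r·exp(−2r²λ²). Consequently the Kuiper p-value KD = 2∑_{j=1}^∞ v(j,λ) satisfies KD ≤ 2·([if r_lo ≥ 1 then (w(r_lo,λ) − w(1,λ) + v(r_lo,λ)) else 0] + v(r_up,λ) − w(r_up,λ)). -/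
/-- `v(r,λ) = (4r²λ² - 1)·exp(-2r²λ²)`. -/
noncomputable def v (r l : ℝ) : ℝ := (4 * r ^ 2 * l ^ 2 - 1) * Real.exp (-2 * r ^ 2 * l ^ 2)
/-- `w(r,λ) = -r·exp(-2r²λ²)`, an antiderivative of `v(·,λ)`. -/
noncomputable def w (r l : ℝ) : ℝ := -r * Real.exp (-2 * r ^ 2 * l ^ 2)

open Set

lemma exp_deriv (l x : ℝ) : HasDerivAt (fun r : ℝ => Real.exp (-2 * r ^ 2 * l ^ 2))
    (Real.exp (-2 * x ^ 2 * l ^ 2) * (-4 * x * l ^ 2)) x := by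
  have h1 : HasDerivAt (fun r : ℝ => -2 * r ^ 2 * l ^ 2) (-4 * x * l ^ 2) x := by
    have := ((hasDerivAt_pow 2 x).const_mul (-2 : ℝ)).mul_const (l ^ 2)
    refine this.congr_deriv ?_
    ring
  exact h1.exp

lemma w_deriv (l x : ℝ) : HasDerivAt (fun r => w r l) (v x l) x := by
  have := ((hasDerivAt_id x).neg).mul (exp_deriv l x)
  refine this.congr_deriv ?_
  unfold v
  simp only [Pi.neg_apply, id_eq]
  ring

lemma v_deriv (l x : ℝ) : HasDerivAt (fun r => v r l)
    (4 * x * l ^ 2 * Real.exp (-2 * x ^ 2 * l ^ 2) * (3 - 4 * x ^ 2 * l ^ 2)) x := by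
  have ha : HasDerivAt (fun r : ℝ => 4 * r ^ 2 * l ^ 2 - 1) (8 * x * l ^ 2) x := by
    have := (((hasDerivAt_pow 2 x).const_mul (4 : ℝ)).mul_const (l ^ 2)).sub_const 1
    refine this.congr_deriv ?_
    ring
  have := ha.mul (exp_deriv l x)
  refine this.congr_deriv ?_
  ring

lemma v_cont (l : ℝ) : Continuous (fun r => v r l) := by
  unfold v; fun_prop

lemma v_integral (l a b : ℝ) : ∫ x in a..b, v x l = w b l - w a l :=
  intervalIntegral.integral_eq_sub_of_hasDerivAt (fun x _ => w_deriv l x)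
    ((v_cont l).intervalIntegrable a b)

lemma v_mono (l : ℝ) (hl : 0 < l) :
    MonotoneOn (fun r => v r l) (Icc 0 (Real.sqrt 3 / (2 * l))) := by
  apply monotoneOn_of_deriv_nonneg (convex_Icc _ _) (v_cont l).continuousOn
  · exact fun x _ => ((v_deriv l x).differentiableAt).differentiableWithinAt
  · intro x hx
    rw [interior_Icc] at hx
    rw [(v_deriv l x).deriv]
    have hx0 : 0 < x := hx.1
    have hx2 : x * (2 * l) < Real.sqrt 3 := by
      have := hx.2
      rw [lt_div_iff₀ (by positivity)] at this
      linarith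
    have h4 : x * (2 * l) * (x * (2 * l)) < Real.sqrt 3 * Real.sqrt 3 :=
      mul_self_lt_mul_self (by positivity) hx2
    rw [Real.mul_self_sqrt (by norm_num)] at h4
    have h3 : 4 * x ^ 2 * l ^ 2 ≤ 3 := by nlinarith
    have he : (0:ℝ) < Real.exp (-2 * x ^ 2 * l ^ 2) := Real.exp_pos _
    exact mul_nonneg (by positivity) (by linarith)

lemma v_anti (l : ℝ) (hl : 0 < l) :
    AntitoneOn (fun r => v r l) (Ici (Real.sqrt 3 / (2 * l))) := by
  apply antitoneOn_of_deriv_nonpos (convex_Ici _) (v_cont l).continuousOn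
  · exact fun x _ => ((v_deriv l x).differentiableAt).differentiableWithinAt
  · intro x hx
    rw [interior_Ici] at hx
    rw [(v_deriv l x).deriv]
    have hx2 : Real.sqrt 3 ≤ x * (2 * l) := by
      rw [mem_Ioi, div_lt_iff₀ (by positivity)] at hx
      linarith
    have hx0 : 0 < x := by
      have h0 : (0:ℝ) < Real.sqrt 3 / (2 * l) := by positivity
      exact h0.trans hx
    have h4 : Real.sqrt 3 * Real.sqrt 3 ≤ x * (2 * l) * (x * (2 * l)) :=
      mul_self_le_mul_self (Real.sqrt_nonneg 3) hx2
    rw [Real.mul_self_sqrt (by norm_num)] at h4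
    have h3 : 3 ≤ 4 * x ^ 2 * l ^ 2 := by nlinarith
    exact mul_nonpos_of_nonneg_of_nonpos (by positivity) (by linarith)

lemma v_nonneg (l x : ℝ) (hl : 0 < l) (hx : Real.sqrt 3 / (2 * l) ≤ x) : 0 ≤ v x l := by
  have hx2 : Real.sqrt 3 ≤ x * (2 * l) := by
    rw [div_le_iff₀ (by positivity)] at hx; linarith
  have h4 : Real.sqrt 3 * Real.sqrt 3 ≤ x * (2 * l) * (x * (2 * l)) :=
    mul_self_le_mul_self (Real.sqrt_nonneg 3) hx2
  rw [Real.mul_self_sqrt (by norm_num)] at h4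
  have h3 : 3 ≤ 4 * x ^ 2 * l ^ 2 := by nlinarith
  unfold v
  exact mul_nonneg (by linarith) (Real.exp_pos _).le

lemma w_nonpos (l x : ℝ) (hx : 0 ≤ x) : w x l ≤ 0 := by
  unfold w
  have := Real.exp_pos (-2 * x ^ 2 * l ^ 2)
  nlinarith

/-- Upper bound of Proposition 2: with `r_lo = ⌊1/(√2λ)⌋`, `r_up = ⌈1/(√2λ)⌉`,
`1/(√2λ)` not an integer and `2·r_up·λ ≥ √3`,
`∑_{j≥1} v(j,λ) ≤ [r_lo ≥ 1] (w(r_lo,λ) - w(1,λ) + v(r_lo,λ)) + v(r_up,λ) - w(r_up,λ)`,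
and hence the Kuiper p-value `KD = 2∑_{j≥1} v(j,λ)` is at most twice the right-hand side. -/
theorem stmt_15 (l : ℝ) (hl : 0 < l) (r_lo r_up : ℕ)
    (hlo : r_lo = ⌊1 / (Real.sqrt 2 * l)⌋₊)
    (hup : r_up = ⌈1 / (Real.sqrt 2 * l)⌉₊)
    (hnotint : ∀ n : ℕ, (n : ℝ) ≠ 1 / (Real.sqrt 2 * l))
    (h : Real.sqrt 3 ≤ 2 * r_up * l) :
    (∑' j : ℕ, v ((j : ℝ) + 1) l)
      ≤ (if 1 ≤ r_lo then w r_lo l - w 1 l + v r_lo l else 0) + v r_up l - w r_up l ∧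
    2 * (∑' j : ℕ, v ((j : ℝ) + 1) l)
      ≤ 2 * ((if 1 ≤ r_lo then w r_lo l - w 1 l + v r_lo l else 0) + v r_up l - w r_up l) := by
  have hs2 : (0:ℝ) < Real.sqrt 2 := Real.sqrt_pos.2 (by norm_num)
  set c : ℝ := 1 / (Real.sqrt 2 * l) with hc
  have hc0 : 0 < c := by positivity
  have hflt : (r_lo : ℝ) < c := by
    rw [hlo]
    exact lt_of_le_of_ne (Nat.floor_le hc0.le) (hnotint _)
  have hup1 : r_up = r_lo + 1 := by
    have h1 : r_up ≤ r_lo + 1 := by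
      rw [hup, hlo]
      refine Nat.ceil_le.2 ?_
      push_cast
      exact (Nat.lt_floor_add_one c).le
    have h2 : r_lo < r_up := by
      have : (r_lo : ℝ) < (r_up : ℝ) := hflt.trans_le (by rw [hup]; exact Nat.le_ceil c)
      exact_mod_cast this
    omega
  have hub : Real.sqrt 3 / (2 * l) ≤ (r_up : ℝ) := by
    rw [div_le_iff₀ (by positivity)]
    linarith
  have hlob : (r_lo : ℝ) ≤ Real.sqrt 3 / (2 * l) := by
    refine hflt.le.trans ?_
    rw [hc, div_le_div_iff₀ (by positivity) (by positivity)]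
    have h62 : (Real.sqrt 3 * Real.sqrt 2) ^ 2 = 6 := by
      rw [mul_pow, Real.sq_sqrt (by norm_num : (0:ℝ) ≤ 3),
        Real.sq_sqrt (by norm_num : (0:ℝ) ≤ 2)]
      norm_num
    have h6 : 2 ≤ Real.sqrt 3 * Real.sqrt 2 := by
      nlinarith [mul_nonneg (Real.sqrt_nonneg 3) (Real.sqrt_nonneg 2)]
    nlinarith
  -- Tail estimate
  have key : ∀ n : ℕ, ∑ i ∈ Finset.range n, v ((i:ℝ) + r_up) l ≤ v r_up l - w r_up l := by
    intro n
    have hv0 : 0 ≤ v r_up l := v_nonneg l _ hl hub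
    have hw0 : w (r_up:ℝ) l ≤ 0 := w_nonpos l _ (Nat.cast_nonneg _)
    cases n with
    | zero => simp; linarith
    | succ m =>
      rw [Finset.sum_range_succ']
      have hanti : AntitoneOn (fun r => v r l) (Set.Icc (r_up:ℝ) ((r_up:ℝ) + m)) :=
        (v_anti l hl).mono (fun x hx => le_trans hub hx.1)
      have hint := hanti.sum_le_integral
      rw [v_integral] at hint
      have heq : ∑ i ∈ Finset.range m, v ((↑(i+1):ℝ) + r_up) l
          = ∑ i ∈ Finset.range m, (fun r => v r l) ((r_up:ℝ) + (↑(i+1):ℕ)) := by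
        refine Finset.sum_congr rfl fun i _ => ?_
        simp only []
        congr 1
        push_cast
        ring
      have hw2 : w ((r_up:ℝ) + m) l ≤ 0 := w_nonpos l _ (by positivity)
      simp only [Nat.cast_zero, zero_add]
      calc ∑ i ∈ Finset.range m, v ((↑(i+1):ℝ) + r_up) l + v (r_up:ℝ) l
          ≤ (w ((r_up:ℝ) + m) l - w (r_up:ℝ) l) + v (r_up:ℝ) l := by
            rw [heq]; linarith [hint]
        _ ≤ v (r_up:ℝ) l - w (r_up:ℝ) l := by linarith
  have htail0 : ∀ i : ℕ, 0 ≤ v ((i:ℝ) + r_up) l := fun i =>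
    v_nonneg l _ hl (hub.trans (by simp [Nat.cast_nonneg]))
  have hsumtail : Summable (fun i : ℕ => v ((i:ℝ) + r_up) l) :=
    summable_of_sum_range_le htail0 key
  have htaille : ∑' i : ℕ, v ((i:ℝ) + r_up) l ≤ v r_up l - w r_up l :=
    Summable.tsum_le_of_sum_range_le hsumtail key
  -- Full summability
  have hshift : (fun i : ℕ => v ((↑(i + r_lo) : ℝ) + 1) l) = fun i : ℕ => v ((i:ℝ) + r_up) l := by
    funext i
    congr 1
    push_cast [hup1]
    ring
  have hsumf : Summable (fun j : ℕ => v ((j:ℝ) + 1) l) := by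
    rw [← summable_nat_add_iff r_lo, hshift]
    exact hsumtail
  have hsplit : (∑' j : ℕ, v ((j:ℝ) + 1) l)
      = ∑ j ∈ Finset.range r_lo, v ((j:ℝ) + 1) l + ∑' i : ℕ, v ((i:ℝ) + r_up) l := by
    rw [← hshift]
    exact (Summable.sum_add_tsum_nat_add r_lo hsumf).symm
  -- Head estimate
  have hhead : ∑ j ∈ Finset.range r_lo, v ((j:ℝ) + 1) l
      ≤ if 1 ≤ r_lo then w r_lo l - w 1 l + v r_lo l else 0 := by
    rcases Nat.eq_zero_or_pos r_lo with h0 | hpos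
    · simp [h0]
    · rw [if_pos (by omega : 1 ≤ r_lo)]
      obtain ⟨m, hm⟩ : ∃ m, r_lo = m + 1 := ⟨r_lo - 1, by omega⟩
      subst hm
      rw [Finset.sum_range_succ]
      have hcm : ((1:ℝ) + m) = ((m + 1 : ℕ) : ℝ) := by push_cast; ring
      have hmono : MonotoneOn (fun r => v r l) (Set.Icc (1:ℝ) ((1:ℝ) + m)) := by
        apply (v_mono l hl).mono
        apply Set.Icc_subset_Icc (by norm_num)
        rw [hcm]
        exact hlob
      have hint := hmono.sum_le_integral
      rw [v_integral] at hint
      have heq : ∑ j ∈ Finset.range m, v ((j:ℝ) + 1) l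
          = ∑ j ∈ Finset.range m, (fun r => v r l) ((1:ℝ) + j) := by
        refine Finset.sum_congr rfl fun j _ => ?_
        simp only []
        congr 1
        ring
      rw [heq, hcm] at *
      push_cast
      push_cast at hint
      linarith
  have main : (∑' j : ℕ, v ((j:ℝ) + 1) l)
      ≤ (if 1 ≤ r_lo then w r_lo l - w 1 l + v r_lo l else 0) + v r_up l - w r_up l := by
    rw [hsplit]
    linarith
  exact ⟨main, by linarith⟩
end
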